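/- Let m, m', d ∈ ℕ. Let K = [[Kyy, Kzyᵀ], [Kzy, Kzz]] ∈ ℝ^{(m+m')×(m+m')} be symmetric positive definite with Kyy ∈ ℝ^{m×m} symmetric positive definite, Kzz ∈ ℝ^{m'×m'} symmetric, and Kzy ∈ ℝ^{m'×m}, and write K⁻¹ = [[Wyy, Wyz], [Wzy, Wzz]]. Let y ∈ ℝ^m, define the estimate z̃ := Kzy Kyy⁻¹ y ∈ ℝ^{m'}, let D ∈ ℝ^{m'×d}, and let Γ ∈ ℝ^{d×d} be diagonal with strictly positive diagonal entries. Then: (1) −(Dᵀ Wzz D + Γᵀ Γ)⁻¹ Dᵀ Wzy y = (Dᵀ Wzz D + Γᵀ Γ)⁻¹ Dᵀ Wzz z̃; and (2) this common vector μ is the unique minimizer over η ∈ ℝ^d of the functional η ↦ ‖Dη − z̃‖²_{Wzz} + ‖Γη‖²₂. -/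

import Mathlib

open Matrix

private lemma dp_transpose_aux {n d : ℕ} (D : Matrix (Fin n) (Fin d) ℝ)
    (v : Fin n → ℝ) (x : Fin d → ℝ) :
    x ⬝ᵥ (Dᵀ *ᵥ v) = (D *ᵥ x) ⬝ᵥ v := by
  rw [Matrix.dotProduct_mulVec, Matrix.vecMul_transpose]

private lemma dp_symm_aux {n : ℕ} {W : Matrix (Fin n) (Fin n) ℝ} (hW : Wᵀ = W)
    (u v : Fin n → ℝ) :
    u ⬝ᵥ (W *ᵥ v) = v ⬝ᵥ (W *ᵥ u) := by
  rw [Matrix.dotProduct_mulVec, ← Matrix.mulVec_transpose, hW, dotProduct_comm]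

private lemma expand_aux {n d : ℕ} (W : Matrix (Fin n) (Fin n) ℝ) (hW : Wᵀ = W)
    (D : Matrix (Fin n) (Fin d) ℝ) (G : Matrix (Fin d) (Fin d) ℝ)
    (z : Fin n → ℝ) (η : Fin d → ℝ) :
    (D *ᵥ η - z) ⬝ᵥ (W *ᵥ (D *ᵥ η - z)) + (G *ᵥ η) ⬝ᵥ (G *ᵥ η)
      = η ⬝ᵥ ((Dᵀ * W * D + Gᵀ * G) *ᵥ η) - 2 * (η ⬝ᵥ (Dᵀ *ᵥ (W *ᵥ z)))
        + z ⬝ᵥ (W *ᵥ z) := by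
  have e1 : η ⬝ᵥ ((Dᵀ * W * D) *ᵥ η) = (D *ᵥ η) ⬝ᵥ (W *ᵥ (D *ᵥ η)) := by
    rw [← Matrix.mulVec_mulVec, ← Matrix.mulVec_mulVec, dp_transpose_aux]
  have e2 : η ⬝ᵥ ((Gᵀ * G) *ᵥ η) = (G *ᵥ η) ⬝ᵥ (G *ᵥ η) := by
    rw [← Matrix.mulVec_mulVec, dp_transpose_aux]
  have e3 : η ⬝ᵥ (Dᵀ *ᵥ (W *ᵥ z)) = (D *ᵥ η) ⬝ᵥ (W *ᵥ z) := dp_transpose_aux ..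
  have e4 : z ⬝ᵥ (W *ᵥ (D *ᵥ η)) = (D *ᵥ η) ⬝ᵥ (W *ᵥ z) := dp_symm_aux hW ..
  rw [Matrix.add_mulVec, dotProduct_add, sub_dotProduct, Matrix.mulVec_sub,
    dotProduct_sub, dotProduct_sub, e1, e2, e3, e4]
  ring

/-- The GP-BayesOpInf posterior mean `μ = −(DᵀWzz D + ΓᵀΓ)⁻¹ Dᵀ Wzy y`, where `Wzy`
and `Wzz` are the bottom blocks of the inverse of the symmetric positive definite
kernel matrix `K = [[Kyy, Kzyᵀ], [Kzy, Kzz]]`, equals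
`(DᵀWzz D + ΓᵀΓ)⁻¹ Dᵀ Wzz z̃` with GP estimate `z̃ = Kzy Kyy⁻¹ y`, and is the unique
minimizer of the Tikhonov-regularized generalized least-squares functional
`η ↦ ‖Dη − z̃‖²_{Wzz} + ‖Γη‖²₂`. -/
theorem stmt_17 (m m' d : ℕ)
    (Kyy : Matrix (Fin m) (Fin m) ℝ)
    (Kzy : Matrix (Fin m') (Fin m) ℝ)
    (Kzz : Matrix (Fin m') (Fin m') ℝ)
    (hKyy : Kyy.PosDef)
    (hKzz : Kzz.IsSymm)
    (hK : (Matrix.fromBlocks Kyy Kzyᵀ Kzy Kzz).PosDef)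
    (Wzy : Matrix (Fin m') (Fin m) ℝ)
    (hWzy : Wzy = ((Matrix.fromBlocks Kyy Kzyᵀ Kzy Kzz)⁻¹).toBlocks₂₁)
    (Wzz : Matrix (Fin m') (Fin m') ℝ)
    (hWzz : Wzz = ((Matrix.fromBlocks Kyy Kzyᵀ Kzy Kzz)⁻¹).toBlocks₂₂)
    (y : Fin m → ℝ)
    (zt : Fin m' → ℝ) (hzt : zt = Kzy *ᵥ (Kyy⁻¹ *ᵥ y))
    (D : Matrix (Fin m') (Fin d) ℝ)
    (γ : Fin d → ℝ) (hγ : ∀ i, 0 < γ i)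
    (Γ : Matrix (Fin d) (Fin d) ℝ) (hΓ : Γ = Matrix.diagonal γ)
    (μ : Fin d → ℝ)
    (hμ : μ = -((Dᵀ * Wzz * D + Γᵀ * Γ)⁻¹ *ᵥ (Dᵀ *ᵥ (Wzy *ᵥ y)))) :
    μ = (Dᵀ * Wzz * D + Γᵀ * Γ)⁻¹ *ᵥ (Dᵀ *ᵥ (Wzz *ᵥ zt)) ∧
    ∀ η : Fin d → ℝ,
      ((D *ᵥ μ - zt) ⬝ᵥ (Wzz *ᵥ (D *ᵥ μ - zt)) + (Γ *ᵥ μ) ⬝ᵥ (Γ *ᵥ μ)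
          ≤ (D *ᵥ η - zt) ⬝ᵥ (Wzz *ᵥ (D *ᵥ η - zt)) + (Γ *ᵥ η) ⬝ᵥ (Γ *ᵥ η)) ∧
      ((D *ᵥ η - zt) ⬝ᵥ (Wzz *ᵥ (D *ᵥ η - zt)) + (Γ *ᵥ η) ⬝ᵥ (Γ *ᵥ η)
          = (D *ᵥ μ - zt) ⬝ᵥ (Wzz *ᵥ (D *ᵥ μ - zt)) + (Γ *ᵥ μ) ⬝ᵥ (Γ *ᵥ μ)
        → η = μ) := by
  set K := Matrix.fromBlocks Kyy Kzyᵀ Kzy Kzz with hKdef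
  -- K⁻¹ is positive definite, hence its bottom-right block is positive semidefinite
  have hKinv : (K⁻¹).PosDef := hK.inv
  have hWzzPSD : Wzz.PosSemidef := by
    have : Wzz = (K⁻¹).submatrix Sum.inr Sum.inr := by
      rw [hWzz]; rfl
    rw [this]
    exact hKinv.posSemidef.submatrix _
  have hWzzSymm : Wzzᵀ = Wzz := by
    have := hWzzPSD.isHermitian
    rwa [Matrix.IsHermitian, conjTranspose_eq_transpose_of_trivial] at this
  -- A := DᵀWzzD + ΓᵀΓ is positive definite
  set A := Dᵀ * Wzz * D + Γᵀ * Γ with hAdef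
  have hGG : Γᵀ * Γ = Matrix.diagonal (fun i => γ i * γ i) := by
    rw [hΓ, Matrix.diagonal_transpose, Matrix.diagonal_mul_diagonal]
  have hA : A.PosDef := by
    rw [hAdef]
    refine Matrix.PosDef.posSemidef_add ?_ ?_
    · have := hWzzPSD.conjTranspose_mul_mul_same D
      rwa [conjTranspose_eq_transpose_of_trivial] at this
    · rw [hGG]
      exact Matrix.PosDef.diagonal fun i => mul_pos (hγ i) (hγ i)
  have hASymm : Aᵀ = A := by
    have := hA.isHermitian
    rwa [Matrix.IsHermitian, conjTranspose_eq_transpose_of_trivial] at this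
  -- block identity : Wzy * Kyy + Wzz * Kzy = 0
  have hKunit : IsUnit K.det := (Matrix.isUnit_iff_isUnit_det K).1 hK.isUnit
  have hinvK : K⁻¹ * K = 1 := Matrix.nonsing_inv_mul K hKunit
  have hblock : Wzy * Kyy + Wzz * Kzy = 0 := by
    have h1 : (K⁻¹ * K).toBlocks₂₁ = (1 : Matrix (Fin m ⊕ Fin m') (Fin m ⊕ Fin m') ℝ).toBlocks₂₁ := by
      rw [hinvK]
    have h2 : K⁻¹ * K =
        Matrix.fromBlocks ((K⁻¹).toBlocks₁₁) ((K⁻¹).toBlocks₁₂) ((K⁻¹).toBlocks₂₁) ((K⁻¹).toBlocks₂₂)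
          * Matrix.fromBlocks Kyy Kzyᵀ Kzy Kzz := by
      rw [Matrix.fromBlocks_toBlocks]
    rw [h2, Matrix.fromBlocks_multiply, ← Matrix.fromBlocks_one,
      Matrix.toBlocks_fromBlocks₂₁, Matrix.toBlocks_fromBlocks₂₁] at h1
    rw [hWzy, hWzz, h1]
  -- hence Wzy *ᵥ y = -(Wzz *ᵥ zt)
  have hKyyUnit : IsUnit Kyy.det := (Matrix.isUnit_iff_isUnit_det Kyy).1 hKyy.isUnit
  have hWzyEq : Wzy = -(Wzz * Kzy * Kyy⁻¹) := by
    have h3 : Wzy * Kyy = -(Wzz * Kzy) := by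
      rw [eq_neg_iff_add_eq_zero]; exact hblock
    calc Wzy = Wzy * Kyy * Kyy⁻¹ := by
            rw [Matrix.mul_assoc, Matrix.mul_nonsing_inv Kyy hKyyUnit, Matrix.mul_one]
      _ = -(Wzz * Kzy) * Kyy⁻¹ := by rw [h3]
      _ = -(Wzz * Kzy * Kyy⁻¹) := by rw [Matrix.neg_mul]
  have hkey : Wzy *ᵥ y = -(Wzz *ᵥ zt) := by
    rw [hWzyEq, hzt, Matrix.mulVec_mulVec, Matrix.mulVec_mulVec, Matrix.neg_mulVec]
  -- part 1
  have hb' : μ = A⁻¹ *ᵥ (Dᵀ *ᵥ (Wzz *ᵥ zt)) := by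
    rw [hμ, hkey]
    rw [Matrix.mulVec_neg, Matrix.mulVec_neg, neg_neg]
  refine ⟨hb', fun η => ?_⟩
  -- A μ = b
  set b := Dᵀ *ᵥ (Wzz *ᵥ zt) with hbdef
  have hAμ : A *ᵥ μ = b := by
    rw [hb', Matrix.mulVec_mulVec, Matrix.mul_nonsing_inv A
      ((Matrix.isUnit_iff_isUnit_det A).1 hA.isUnit), Matrix.one_mulVec]
  -- quadratic expansion : f x = x⬝Ax - 2 x⬝b + c
  have hf : ∀ x : Fin d → ℝ,
      (D *ᵥ x - zt) ⬝ᵥ (Wzz *ᵥ (D *ᵥ x - zt)) + (Γ *ᵥ x) ⬝ᵥ (Γ *ᵥ x)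
        = x ⬝ᵥ (A *ᵥ x) - 2 * (x ⬝ᵥ b) + zt ⬝ᵥ (Wzz *ᵥ zt) :=
    fun x => expand_aux Wzz hWzzSymm D Γ zt x
  have hAs : ∀ u v : Fin d → ℝ, u ⬝ᵥ (A *ᵥ v) = v ⬝ᵥ (A *ᵥ u) := dp_symm_aux hASymm
  -- f η - f μ = (η-μ)⊤A(η-μ)
  have hdiff :
      (D *ᵥ η - zt) ⬝ᵥ (Wzz *ᵥ (D *ᵥ η - zt)) + (Γ *ᵥ η) ⬝ᵥ (Γ *ᵥ η)
        = ((D *ᵥ μ - zt) ⬝ᵥ (Wzz *ᵥ (D *ᵥ μ - zt)) + (Γ *ᵥ μ) ⬝ᵥ (Γ *ᵥ μ))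
          + (η - μ) ⬝ᵥ (A *ᵥ (η - μ)) := by
    have hq : (η - μ) ⬝ᵥ (A *ᵥ (η - μ))
        = η ⬝ᵥ (A *ᵥ η) - 2 * (η ⬝ᵥ b) + μ ⬝ᵥ b := by
      rw [Matrix.mulVec_sub, sub_dotProduct, dotProduct_sub, dotProduct_sub,
        hAs μ η, hAμ]
      ring
    have hμb : μ ⬝ᵥ (A *ᵥ μ) = μ ⬝ᵥ b := by rw [hAμ]
    rw [hf η, hf μ, hq, hμb]; ring
  constructor
  · rw [hdiff]
    have : 0 ≤ (η - μ) ⬝ᵥ (A *ᵥ (η - μ)) := by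
      have := hA.posSemidef.dotProduct_mulVec_nonneg (η - μ)
      simpa using this
    linarith
  · intro heq
    by_contra hne
    have hsub : η - μ ≠ 0 := sub_ne_zero_of_ne hne
    have hpos : 0 < (η - μ) ⬝ᵥ (A *ᵥ (η - μ)) := by
      have := hA.dotProduct_mulVec_pos hsub
      simpa using this
    rw [hdiff] at heq
    linarith
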